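/- For finitely generated groups G1, G2, the co-rank of the free product satisfies corank(G1 * G2) = corank(G1) + corank(G2). -/

import Mathlib

/-- `G` surjects onto the free abelian group of rank `n`. -/
def SurjOntoFreeAbelian (G : Type*) [Group G] (n : ℕ) : Prop :=
  ∃ f : G →* Multiplicative (Fin n → ℤ), Function.Surjective f

/-- The Betti number of `G` is `b`: the maximal rank of a free abelian quotient of `G`. -/
def BettiIs (G : Type*) [Group G] (b : ℕ) : Prop :=
  SurjOntoFreeAbelian G b ∧ ∀ m, SurjOntoFreeAbelian G m → m ≤ b

/-- `G` surjects onto the free group of rank `n`. -/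
def SurjOntoFree (G : Type*) [Group G] (n : ℕ) : Prop :=
  ∃ f : G →* FreeGroup (Fin n), Function.Surjective f

/-- The co-rank of `G` is `c`: the maximal rank of a free quotient of `G`. -/
def CorankIs (G : Type*) [Group G] (c : ℕ) : Prop :=
  SurjOntoFree G c ∧ ∀ m, SurjOntoFree G m → m ≤ c

open Function

section helpers
variable {m : ℕ}

lemma abHom_surjective' (m : ℕ) :
    Surjective (FreeGroup.lift (fun i => Multiplicative.ofAdd (Pi.single i 1)) :
      FreeGroup (Fin m) →* Multiplicative (Fin m → ℤ)) := by
  intro x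
  refine ⟨((List.finRange m).map (fun i => (FreeGroup.of i) ^ (x.toAdd i))).prod, ?_⟩
  apply Multiplicative.toAdd.injective
  rw [map_list_prod, List.map_map]
  have : Multiplicative.toAdd
      (((List.finRange m).map ((FreeGroup.lift fun i => Multiplicative.ofAdd (Pi.single i 1)) ∘
        fun i => FreeGroup.of i ^ x.toAdd i)).prod)
      = (((List.finRange m).map (fun i => Pi.single i (x.toAdd i) : Fin m → Fin m → ℤ))).sum := by
    rw [toAdd_list_sum, List.map_map]
    congr 1
    apply List.map_congr_left
    intro i _
    simp only [comp_apply, map_zpow, FreeGroup.lift_apply_of, toAdd_zpow, toAdd_ofAdd]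
    ext j
    by_cases h : j = i <;> simp [Pi.single_apply, h]
  rw [this, ← Fin.sum_univ_def, Finset.univ_sum_single]

lemma rank_bound {k m : ℕ} (f : FreeGroup (Fin k) →* Multiplicative (Fin m → ℤ))
    (hf : Surjective f) : m ≤ k := by
  set v : Fin k → (Fin m → ℤ) := fun i => (f (FreeGroup.of i)).toAdd with hv
  have hmem : ∀ w : FreeGroup (Fin k), (f w).toAdd ∈ Submodule.span ℤ (Set.range v) := by
    intro w
    induction w using FreeGroup.induction_on with
    | C1 => simp
    | of x => exact Submodule.subset_span ⟨x, rfl⟩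
    | inv_of x ih => simpa using Submodule.neg_mem _ ih
    | mul x y ihx ihy => simpa using Submodule.add_mem _ ihx ihy
  have hspan : Submodule.span ℤ (Set.range v) = ⊤ := by
    rw [eq_top_iff]
    intro x _
    obtain ⟨w, hw⟩ := hf (Multiplicative.ofAdd x)
    simpa [hw] using hmem w
  have h1 : Module.rank ℤ (Fin m → ℤ) ≤ Cardinal.mk (Set.range v) := by
    rw [← rank_top ℤ (Fin m → ℤ), ← hspan]
    exact rank_span_le _
  have h2 : (Cardinal.mk (Set.range v)) ≤ k := le_trans Cardinal.mk_range_le (by simp)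
  have h3 := h1.trans h2
  rw [rank_fin_fun] at h3
  exact_mod_cast h3

lemma freeGroup_fg_finite (S : Type*) [Group.FG (FreeGroup S)] : Finite S := by
  classical
  obtain ⟨T, hT⟩ := Group.FG.out (G := FreeGroup S)
  set U : Finset S := T.biUnion (fun t => (t.toWord.map Prod.fst).toFinset) with hUdef
  have hU : ∀ s : S, s ∈ U := by
    intro s
    by_contra hs
    set φ : FreeGroup S →* Multiplicative ℤ :=
      FreeGroup.lift (fun x => if x = s then Multiplicative.ofAdd 1 else 1) with hφ
    have hker : ∀ t ∈ (T : Set (FreeGroup S)), φ t = 1 := by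
      intro t ht
      have hw : ∀ p ∈ t.toWord, p.1 ≠ s := by
        intro p hp he
        apply hs
        rw [hUdef]
        refine Finset.mem_biUnion.2 ⟨t, ht, ?_⟩
        rw [List.mem_toFinset, ← he]
        exact List.mem_map_of_mem (f := Prod.fst) hp
      conv_lhs => rw [← FreeGroup.mk_toWord (x := t)]
      rw [hφ, FreeGroup.lift_mk]
      apply List.prod_eq_one
      intro a ha
      obtain ⟨p, hp, rfl⟩ := List.mem_map.1 ha
      have := hw p hp
      simp [this]
    have htop : ∀ w : FreeGroup S, φ w = 1 := by
      intro w
      have hw : w ∈ Subgroup.closure (T : Set (FreeGroup S)) := hT ▸ Subgroup.mem_top w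
      refine Subgroup.closure_induction (fun x hx => hker x hx) rfl ?_ ?_ hw
      · intro x y _ _ hx hy; rw [map_mul, hx, hy, mul_one]
      · intro x _ hx; rw [map_inv, hx, inv_one]
    have h1 : φ (FreeGroup.of s) = 1 := htop _
    rw [hφ, FreeGroup.lift_apply_of, if_pos rfl] at h1
    exact one_ne_zero (α := ℤ) (by simpa using h1)
  have : Fintype S := ⟨U, hU⟩
  exact Finite.of_fintype S

lemma exists_mulEquiv_freeGroup_fin (H : Type*) [Group H] [IsFreeGroup H] [Group.FG H] :
    ∃ r : ℕ, Nonempty (H ≃* FreeGroup (Fin r)) := by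
  classical
  let e : H ≃* FreeGroup (IsFreeGroup.Generators H) := IsFreeGroup.toFreeGroup H
  have hfg : Group.FG (FreeGroup (IsFreeGroup.Generators H)) :=
    Group.fg_of_surjective (f := e.toMonoidHom) e.surjective
  have hfin : Finite (IsFreeGroup.Generators H) := freeGroup_fg_finite _
  have : Fintype (IsFreeGroup.Generators H) := Fintype.ofFinite _
  exact ⟨Fintype.card _, ⟨e.trans (FreeGroup.freeGroupCongr (Fintype.equivFin _))⟩⟩

end helpers

theorem stmt11 (G1 G2 : Type*) [Group G1] [Group G2] [Group.FG G1] [Group.FG G2]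
    (c1 c2 : ℕ) (h1 : CorankIs G1 c1) (h2 : CorankIs G2 c2) :
    CorankIs (Monoid.Coprod G1 G2) (c1 + c2) := by
  classical
  constructor
  · -- lower bound
    obtain ⟨f1, hf1⟩ := h1.1
    obtain ⟨f2, hf2⟩ := h2.1
    let j1 : FreeGroup (Fin c1) →* FreeGroup (Fin c1 ⊕ Fin c2) := FreeGroup.map Sum.inl
    let j2 : FreeGroup (Fin c2) →* FreeGroup (Fin c1 ⊕ Fin c2) := FreeGroup.map Sum.inr
    let g0 : Monoid.Coprod G1 G2 →* FreeGroup (Fin c1 ⊕ Fin c2) :=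
      Monoid.Coprod.lift (j1.comp f1) (j2.comp f2)
    have hg0 : Surjective g0 := by
      rw [← MonoidHom.range_eq_top, eq_top_iff, ← FreeGroup.closure_range_of,
        Subgroup.closure_le]
      rintro _ ⟨x, rfl⟩
      cases x with
      | inl i =>
        obtain ⟨a, ha⟩ := hf1 (FreeGroup.of i)
        exact ⟨Monoid.Coprod.inl a, by
          simp [g0, Monoid.Coprod.lift_apply_inl, ha, j1, FreeGroup.map.of]⟩
      | inr i =>
        obtain ⟨a, ha⟩ := hf2 (FreeGroup.of i)
        exact ⟨Monoid.Coprod.inr a, by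
          simp [g0, Monoid.Coprod.lift_apply_inr, ha, j2, FreeGroup.map.of]⟩
    exact ⟨(FreeGroup.freeGroupCongr finSumFinEquiv).toMonoidHom.comp g0,
      (FreeGroup.freeGroupCongr finSumFinEquiv).surjective.comp hg0⟩
  · -- upper bound
    rintro m ⟨f, hf⟩
    set K1 := (f.comp Monoid.Coprod.inl).range with hK1def
    set K2 := (f.comp Monoid.Coprod.inr).range with hK2def
    have fg1 : Group.FG K1 :=
      Group.fg_of_surjective (f.comp Monoid.Coprod.inl).rangeRestrict_surjective
    have fg2 : Group.FG K2 :=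
      Group.fg_of_surjective (f.comp Monoid.Coprod.inr).rangeRestrict_surjective
    obtain ⟨r1, ⟨e1⟩⟩ := exists_mulEquiv_freeGroup_fin K1
    obtain ⟨r2, ⟨e2⟩⟩ := exists_mulEquiv_freeGroup_fin K2
    have hr1 : r1 ≤ c1 := h1.2 r1
      ⟨e1.toMonoidHom.comp (f.comp Monoid.Coprod.inl).rangeRestrict,
        e1.surjective.comp (f.comp Monoid.Coprod.inl).rangeRestrict_surjective⟩
    have hr2 : r2 ≤ c2 := h2.2 r2
      ⟨e2.toMonoidHom.comp (f.comp Monoid.Coprod.inr).rangeRestrict,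
        e2.surjective.comp (f.comp Monoid.Coprod.inr).rangeRestrict_surjective⟩
    -- build a surjection FreeGroup (Fin r1 ⊕ Fin r2) → FreeGroup (Fin m)
    let θ0 : FreeGroup (Fin r1 ⊕ Fin r2) →* FreeGroup (Fin m) :=
      FreeGroup.lift (Sum.elim (fun i => (e1.symm (FreeGroup.of i) : FreeGroup (Fin m)))
        (fun i => (e2.symm (FreeGroup.of i) : FreeGroup (Fin m))))
    have hsub1 : ∀ w : FreeGroup (Fin r1),
        (↑(e1.symm w) : FreeGroup (Fin m)) ∈ θ0.range := by
      intro w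
      induction w using FreeGroup.induction_on with
      | C1 => simpa using one_mem θ0.range
      | of x => exact ⟨FreeGroup.of (Sum.inl x), by simp [θ0]⟩
      | inv_of x ih => simpa using inv_mem ih
      | mul x y ihx ihy => simpa using mul_mem ihx ihy
    have hsub2 : ∀ w : FreeGroup (Fin r2),
        (↑(e2.symm w) : FreeGroup (Fin m)) ∈ θ0.range := by
      intro w
      induction w using FreeGroup.induction_on with
      | C1 => simpa using one_mem θ0.range
      | of x => exact ⟨FreeGroup.of (Sum.inr x), by simp [θ0]⟩
      | inv_of x ih => simpa using inv_mem ih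
      | mul x y ihx ihy => simpa using mul_mem ihx ihy
    have hθ0 : Surjective θ0 := by
      intro x
      have hx : x ∈ MonoidHom.mrange f := MonoidHom.mrange_eq_top.2 hf ▸ Submonoid.mem_top x
      rw [Monoid.Coprod.mrange_eq] at hx
      have hle : MonoidHom.mrange (f.comp Monoid.Coprod.inl) ⊔
          MonoidHom.mrange (f.comp Monoid.Coprod.inr) ≤ θ0.range.toSubmonoid := by
        refine sup_le ?_ ?_
        · rintro _ ⟨a, rfl⟩
          have hmem : (f.comp Monoid.Coprod.inl) a ∈ K1 := ⟨a, rfl⟩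
          have : (⟨(f.comp Monoid.Coprod.inl) a, hmem⟩ : K1) = e1.symm (e1 ⟨_, hmem⟩) :=
            (e1.symm_apply_apply _).symm
          have h4 := hsub1 (e1 ⟨_, hmem⟩)
          rw [← this] at h4
          exact h4
        · rintro _ ⟨a, rfl⟩
          have hmem : (f.comp Monoid.Coprod.inr) a ∈ K2 := ⟨a, rfl⟩
          have : (⟨(f.comp Monoid.Coprod.inr) a, hmem⟩ : K2) = e2.symm (e2 ⟨_, hmem⟩) :=
            (e2.symm_apply_apply _).symm
          have h4 := hsub2 (e2 ⟨_, hmem⟩)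
          rw [← this] at h4
          exact h4
      exact hle hx
    have hsurj : Surjective
        ((FreeGroup.lift (fun i => Multiplicative.ofAdd (Pi.single i 1)) :
            FreeGroup (Fin m) →* Multiplicative (Fin m → ℤ)).comp
          (θ0.comp (FreeGroup.freeGroupCongr finSumFinEquiv.symm).toMonoidHom)) :=
      (abHom_surjective' m).comp (hθ0.comp (FreeGroup.freeGroupCongr finSumFinEquiv.symm).surjective)
    have hm : m ≤ r1 + r2 := rank_bound _ hsurj
    omega
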